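/- Assume R is positive definite and Q is positive semidefinite, and suppose the CARE admits a solution with every W_i positive definite. Then, for every G_k-adapted input process and every k ≥ d, the Lyapunov functional satisfies the sandwich bounds E[x(k)′ Ω_{(θ(k−1), θ(k−2), …, θ(k−d))} x(k)] ≤ V(k) ≤ E[x(k)′ P_{θ(k−1)} x(k)]; in particular, if E[x(k)′x(k)] → 0 as k → ∞ then V(k) → 0. -/

import Mathlib

open MeasureTheory Filter Matrix Topology
open scoped ENNReal

noncomputable section

/-- The data of a Markov jump linear system with input delay:
dimensions `n, m`, number of modes `L`, delay `d`, mode matrices `A, B`,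
symmetric weight matrices `Q, R`, and a row-stochastic transition matrix `Pr`. -/
structure MJParams where
  n : ℕ
  m : ℕ
  L : ℕ
  d : ℕ
  hn : 0 < n
  hm : 0 < m
  hL : 0 < L
  hd : 0 < d
  A : Fin L → Matrix (Fin n) (Fin n) ℝ
  B : Fin L → Matrix (Fin n) (Fin m) ℝ
  Q : Matrix (Fin n) (Fin n) ℝ
  R : Matrix (Fin m) (Fin m) ℝ
  Pr : Matrix (Fin L) (Fin L) ℝ
  hQsymm : Q.IsSymm
  hRsymm : R.IsSymm
  hPrnonneg : ∀ i j, 0 ≤ Pr i j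
  hPrrow : ∀ i, ∑ j, Pr i j = 1

namespace MJParams

variable (S : MJParams)

/-- Probability weight `λ_{i j₁} λ_{j₁ j₂} ⋯ λ_{j_{s-1} j_s}` of the mode path
`j = (j₁, …, j_s)` (0-indexed) started from mode `i`. -/
def pw (i : Fin S.L) {s : ℕ} (j : Fin s → Fin S.L) : ℝ :=
  ∏ t : Fin s,
    S.Pr (if _ : (t : ℕ) = 0 then i
          else j ⟨(t : ℕ) - 1, lt_of_le_of_lt (Nat.sub_le _ _) t.isLt⟩) (j t)

/-- `E_i^{(s)}[f]`: expectation of a (matrix-valued) function of mode paths of length `s`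
started from mode `i`. -/
def expect (i : Fin S.L) (s : ℕ) {α : Type*} [AddCommMonoid α] [Module ℝ α]
    (f : (Fin s → Fin S.L) → α) : α :=
  ∑ j : Fin s → Fin S.L, S.pw i j • f j

def dflt : Fin S.L := ⟨0, S.hL⟩

/-- Entry `q` (0-indexed) of a mode path, i.e. `j_{q+1}` in 1-indexed notation. -/
def pget {s : ℕ} (j : Fin s → Fin S.L) (q : ℕ) : Fin S.L :=
  if h : q < s then j ⟨q, h⟩ else S.dflt

def Aget {s : ℕ} (j : Fin s → Fin S.L) (q : ℕ) : Matrix (Fin S.n) (Fin S.n) ℝ :=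
  S.A (S.pget j q)

def Bget {s : ℕ} (j : Fin s → Fin S.L) (q : ℕ) : Matrix (Fin S.n) (Fin S.m) ℝ :=
  S.B (S.pget j q)

/-- The product `A_{j (a+c-1)} * ⋯ * A_{j a}` along a mode path (identity when `c = 0`). -/
def Aprod {s : ℕ} (j : Fin s → Fin S.L) (a c : ℕ) : Matrix (Fin S.n) (Fin S.n) ℝ :=
  ((List.range c).map (fun t => S.Aget j (a + c - 1 - t))).prod

end MJParams

/-- The coupled difference Riccati equation (CDRE) with zero terminal data, horizon `N`.
The matrix inverse `(W _ _)⁻¹` is Mathlib's matrix inverse (which is the genuine inverse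
whenever the matrix is invertible). -/
structure CDRE (S : MJParams) (N : ℤ) where
  P : Fin S.L → ℤ → Matrix (Fin S.n) (Fin S.n) ℝ
  P0 : Fin S.L → ℤ → Matrix (Fin S.n) (Fin S.n) ℝ
  W : Fin S.L → ℤ → Matrix (Fin S.m) (Fin S.m) ℝ
  T0 : Fin S.L → ℤ → Matrix (Fin S.m) (Fin S.n) ℝ
  T : ℕ → Fin S.L → ℤ → Matrix (Fin S.m) (Fin S.m) ℝ
  hPterm : ∀ i, P i N = 0
  hP0term : ∀ i, ∀ t : ℤ, 0 ≤ t → t ≤ (S.d : ℤ) - 1 → P0 i (N - t) = 0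
  hT0term : ∀ i, ∀ t : ℤ, 0 ≤ t → t ≤ (S.d : ℤ) - 1 → T0 i (N - t) = 0
  hTterm : ∀ r : ℕ, 1 ≤ r → r ≤ S.d - 1 → ∀ i, ∀ t : ℤ, 0 ≤ t → t ≤ (S.d : ℤ) - 1 →
    T r i (N - t) = 0
  hP : ∀ i, ∀ k : ℤ, 0 ≤ k → k ≤ N →
    P i (k - 1) = ∑ j, S.Pr i j • (S.Q + (S.A j)ᵀ * (P j k - P0 j k) * S.A j)
  hP0 : ∀ i, ∀ k : ℤ, 0 ≤ k → k ≤ N →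
    P0 i (k - 1) = (T0 i (k - 1))ᵀ * (W i (k - 1))⁻¹ * T0 i (k - 1)
  hW : ∀ i, ∀ k : ℤ, 0 ≤ k → k ≤ N →
    W i (k - S.d) =
      S.expect i S.d (fun j =>
        (S.Bget j (S.d - 1))ᵀ * (P (S.pget j (S.d - 1)) k - P0 (S.pget j (S.d - 1)) k) *
          S.Bget j (S.d - 1) + S.R)
      - ∑ s ∈ Finset.Icc 1 (S.d - 1),
          S.expect i (S.d - s) (fun j =>
            (T s (S.pget j (S.d - s - 1)) (k - s))ᵀ * (W (S.pget j (S.d - s - 1)) (k - s))⁻¹ *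
              T s (S.pget j (S.d - s - 1)) (k - s))
  hT0 : ∀ i, ∀ k : ℤ, 0 ≤ k → k ≤ N →
    T0 i (k - S.d) =
      S.expect i S.d (fun j =>
        (S.Bget j (S.d - 1))ᵀ * (P (S.pget j (S.d - 1)) k - P0 (S.pget j (S.d - 1)) k) *
          S.Aprod j 0 S.d)
      - ∑ s ∈ Finset.Icc 1 (S.d - 1),
          S.expect i (S.d - s) (fun j =>
            (T s (S.pget j (S.d - s - 1)) (k - s))ᵀ * (W (S.pget j (S.d - s - 1)) (k - s))⁻¹ *
              T0 (S.pget j (S.d - s - 1)) (k - s) * S.Aprod j 0 (S.d - s))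
  hT : ∀ r : ℕ, 1 ≤ r → r ≤ S.d - 1 → ∀ i, ∀ k : ℤ, 0 ≤ k → k ≤ N →
    T r i (k - S.d) =
      S.expect i S.d (fun j =>
        (S.Bget j (S.d - 1))ᵀ * (P (S.pget j (S.d - 1)) k - P0 (S.pget j (S.d - 1)) k) *
          (S.Aprod j r (S.d - r) * S.Bget j (r - 1)))
      - ∑ s ∈ Finset.Icc 1 (S.d - r),
          S.expect i (S.d - s) (fun j =>
            (T s (S.pget j (S.d - s - 1)) (k - s))ᵀ * (W (S.pget j (S.d - s - 1)) (k - s))⁻¹ *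
              T0 (S.pget j (S.d - s - 1)) (k - s) * (S.Aprod j r (S.d - s - r) * S.Bget j (r - 1)))
      - ∑ s ∈ Finset.Icc (S.d - r + 1) (S.d - 1),
          S.expect i (S.d - s) (fun j =>
            (T s (S.pget j (S.d - s - 1)) (k - s))ᵀ * (W (S.pget j (S.d - s - 1)) (k - s))⁻¹ *
              T (s - (S.d - r)) (S.pget j (S.d - s - 1)) (k - s))

/-- The CDRE together with the auxiliary quantities `δ` and (path-indexed) `α`. -/
structure CDREX (S : MJParams) (N : ℤ) extends CDRE S N where
  δ : ℕ → Fin S.L → ℤ → Matrix (Fin S.m) (Fin S.n) ℝ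
  α : (s : ℕ) → (Fin s → Fin S.L) → ℤ → Matrix (Fin S.m) (Fin S.n) ℝ
  hδterm : ∀ r i, ∀ t : ℤ, N - 1 ≤ t → δ r i t = 0
  hδ1 : 1 ≤ S.d - 1 → ∀ i, ∀ k : ℤ, 0 ≤ k → k ≤ N →
    (δ 1 i (k - 1))ᵀ = (∑ j, S.Pr i j • ((S.A j)ᵀ * (P j k - P0 j k) * S.B j))
      - (T0 i (k - 1))ᵀ * (W i (k - 1))⁻¹ * T 1 i (k - 1)
  hδr : ∀ r : ℕ, 2 ≤ r → r ≤ S.d - 1 → ∀ i, ∀ k : ℤ, 0 ≤ k → k ≤ N →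
    (δ r i (k - 1))ᵀ = (∑ j, S.Pr i j • ((S.A j)ᵀ * (δ (r - 1) j k)ᵀ))
      - (T0 i (k - 1))ᵀ * (W i (k - 1))⁻¹ * T r i (k - 1)
  hα1 : 1 ≤ S.d - 1 → ∀ (p : Fin 1 → Fin S.L) (t : ℤ), α 1 p t = δ (S.d - 1) (p 0) t
  hαj : ∀ jj : ℕ, 2 ≤ jj → jj ≤ S.d - 1 → ∀ (p : Fin jj → Fin S.L), ∀ k : ℤ, 0 ≤ k → k ≤ N →
    (α jj p (k - 1))ᵀ = (δ (S.d - jj) (S.pget p 0) (k - 1))ᵀ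
      - ∑ s ∈ Finset.Icc 1 (jj - 1),
          (α s (fun t : Fin s => S.pget p (t : ℕ)) (k - 1))ᵀ *
            (W (S.pget p s) (k - 1 - s))⁻¹ * T (S.d - jj + s) (S.pget p s) (k - 1 - s)

/-- The matrix `Ω_{(i₁,…,i_d)}(t, N)` associated with a solution of the CDRE. -/
def CDREX.Omega {S : MJParams} {N : ℤ} (c : CDREX S N) (p : Fin S.d → Fin S.L) (t : ℤ) :
    Matrix (Fin S.n) (Fin S.n) ℝ :=
  (c.P (S.pget p 0) t - c.P0 (S.pget p 0) t)
    - ∑ s ∈ Finset.Icc 1 (S.d - 1),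
        (c.α s (fun r : Fin s => S.pget p (r : ℕ)) t)ᵀ * (c.W (S.pget p s) (t - s))⁻¹ *
          c.α s (fun r : Fin s => S.pget p (r : ℕ)) t

/-- The coupled algebraic Riccati equation (CARE): the stationary version of the CDRE,
with every `W i` invertible. -/
structure CARE (S : MJParams) where
  P : Fin S.L → Matrix (Fin S.n) (Fin S.n) ℝ
  P0 : Fin S.L → Matrix (Fin S.n) (Fin S.n) ℝ
  W : Fin S.L → Matrix (Fin S.m) (Fin S.m) ℝ
  T0 : Fin S.L → Matrix (Fin S.m) (Fin S.n) ℝ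
  T : ℕ → Fin S.L → Matrix (Fin S.m) (Fin S.m) ℝ
  δ : ℕ → Fin S.L → Matrix (Fin S.m) (Fin S.n) ℝ
  α : (s : ℕ) → (Fin s → Fin S.L) → Matrix (Fin S.m) (Fin S.n) ℝ
  hWunit : ∀ i, IsUnit (W i)
  hP : ∀ i, P i = ∑ j, S.Pr i j • (S.Q + (S.A j)ᵀ * (P j - P0 j) * S.A j)
  hP0 : ∀ i, P0 i = (T0 i)ᵀ * (W i)⁻¹ * T0 i
  hW : ∀ i, W i =
      S.expect i S.d (fun j =>
        (S.Bget j (S.d - 1))ᵀ * (P (S.pget j (S.d - 1)) - P0 (S.pget j (S.d - 1))) *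
          S.Bget j (S.d - 1) + S.R)
      - ∑ s ∈ Finset.Icc 1 (S.d - 1),
          S.expect i (S.d - s) (fun j =>
            (T s (S.pget j (S.d - s - 1)))ᵀ * (W (S.pget j (S.d - s - 1)))⁻¹ *
              T s (S.pget j (S.d - s - 1)))
  hT0 : ∀ i, T0 i =
      S.expect i S.d (fun j =>
        (S.Bget j (S.d - 1))ᵀ * (P (S.pget j (S.d - 1)) - P0 (S.pget j (S.d - 1))) *
          S.Aprod j 0 S.d)
      - ∑ s ∈ Finset.Icc 1 (S.d - 1),
          S.expect i (S.d - s) (fun j =>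
            (T s (S.pget j (S.d - s - 1)))ᵀ * (W (S.pget j (S.d - s - 1)))⁻¹ *
              T0 (S.pget j (S.d - s - 1)) * S.Aprod j 0 (S.d - s))
  hT : ∀ r : ℕ, 1 ≤ r → r ≤ S.d - 1 → ∀ i, T r i =
      S.expect i S.d (fun j =>
        (S.Bget j (S.d - 1))ᵀ * (P (S.pget j (S.d - 1)) - P0 (S.pget j (S.d - 1))) *
          (S.Aprod j r (S.d - r) * S.Bget j (r - 1)))
      - ∑ s ∈ Finset.Icc 1 (S.d - r),
          S.expect i (S.d - s) (fun j =>
            (T s (S.pget j (S.d - s - 1)))ᵀ * (W (S.pget j (S.d - s - 1)))⁻¹ *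
              T0 (S.pget j (S.d - s - 1)) * (S.Aprod j r (S.d - s - r) * S.Bget j (r - 1)))
      - ∑ s ∈ Finset.Icc (S.d - r + 1) (S.d - 1),
          S.expect i (S.d - s) (fun j =>
            (T s (S.pget j (S.d - s - 1)))ᵀ * (W (S.pget j (S.d - s - 1)))⁻¹ *
              T (s - (S.d - r)) (S.pget j (S.d - s - 1)))
  hδ1 : 1 ≤ S.d - 1 → ∀ i,
    (δ 1 i)ᵀ = (∑ j, S.Pr i j • ((S.A j)ᵀ * (P j - P0 j) * S.B j))
      - (T0 i)ᵀ * (W i)⁻¹ * T 1 i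
  hδr : ∀ r : ℕ, 2 ≤ r → r ≤ S.d - 1 → ∀ i,
    (δ r i)ᵀ = (∑ j, S.Pr i j • ((S.A j)ᵀ * (δ (r - 1) j)ᵀ))
      - (T0 i)ᵀ * (W i)⁻¹ * T r i
  hα1 : 1 ≤ S.d - 1 → ∀ (p : Fin 1 → Fin S.L), α 1 p = δ (S.d - 1) (p 0)
  hαj : ∀ jj : ℕ, 2 ≤ jj → jj ≤ S.d - 1 → ∀ (p : Fin jj → Fin S.L),
    (α jj p)ᵀ = (δ (S.d - jj) (S.pget p 0))ᵀ
      - ∑ s ∈ Finset.Icc 1 (jj - 1),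
          (α s (fun t : Fin s => S.pget p (t : ℕ)))ᵀ * (W (S.pget p s))⁻¹ *
            T (S.d - jj + s) (S.pget p s)

/-- The matrix `Ω_{(i₁,…,i_d)}` associated with a solution of the CARE. -/
def CARE.Omega {S : MJParams} (c : CARE S) (p : Fin S.d → Fin S.L) :
    Matrix (Fin S.n) (Fin S.n) ℝ :=
  (c.P (S.pget p 0) - c.P0 (S.pget p 0))
    - ∑ s ∈ Finset.Icc 1 (S.d - 1),
        (c.α s (fun r : Fin s => S.pget p (r : ℕ)))ᵀ * (c.W (S.pget p s))⁻¹ *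
          c.α s (fun r : Fin s => S.pget p (r : ℕ))

/-- A probability space carrying a time-homogeneous Markov chain with values in
`{1,…,L}` and transition matrix `Pr`. -/
structure MarkovChain (S : MJParams) (Ω : Type) [MeasurableSpace Ω] where
  μ : Measure Ω
  hμ : IsProbabilityMeasure μ
  θ : ℕ → Ω → Fin S.L
  hθ : ∀ k, Measurable (θ k)
  hmarkov : ∀ (k : ℕ) (i : ℕ → Fin S.L) (j : Fin S.L),
    0 < μ (⋂ t ∈ Finset.range (k + 1), {ω | θ t ω = i t}) →
    μ ({ω | θ (k + 1) ω = j} ∩ ⋂ t ∈ Finset.range (k + 1), {ω | θ t ω = i t})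
      = ENNReal.ofReal (S.Pr (i k) j) * μ (⋂ t ∈ Finset.range (k + 1), {ω | θ t ω = i t})

/-- The σ-algebra `G_k` generated by `θ(0), …, θ(k)`. -/
def MarkovChain.G {S : MJParams} {Ω : Type} [MeasurableSpace Ω] (M : MarkovChain S Ω) (k : ℕ) : MeasurableSpace Ω :=
  ⨆ t ∈ Finset.range (k + 1), MeasurableSpace.comap (M.θ t) ⊤

/-- The state trajectory of the MJLS with input delay, given initial state `x0` and
input process `u` (defined for all integer times; negative times carry the initial inputs). -/
def traj (S : MJParams) {Ω : Type} [MeasurableSpace Ω] (M : MarkovChain S Ω) (x0 : Fin S.n → ℝ)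
    (u : ℤ → Ω → Fin S.m → ℝ) : ℕ → Ω → Fin S.n → ℝ
  | 0 => fun _ => x0
  | k + 1 => fun ω =>
      (S.A (M.θ k ω)).mulVec (traj S M x0 u k ω)
        + (S.B (M.θ k ω)).mulVec (u ((k : ℤ) - S.d) ω)

/-- The input process `u` carries the prescribed initial data on `[-d, -1]`. -/
def HasInit (S : MJParams) {Ω : Type} [MeasurableSpace Ω] (M : MarkovChain S Ω) (uinit : ℤ → Fin S.m → ℝ)
    (u : ℤ → Ω → Fin S.m → ℝ) : Prop :=
  ∀ t : ℤ, -(S.d : ℤ) ≤ t → t < 0 → u t = fun _ => uinit t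

/-- `u` is the closed loop input under the delayed feedback
`u(k) = -K⁰_{θ(k)} x(k) - ∑_{r=1}^{d-1} K^r_{θ(k)} u(k+r-d)`. -/
def IsFeedback (S : MJParams) {Ω : Type} [MeasurableSpace Ω] (M : MarkovChain S Ω)
    (K0 : Fin S.L → Matrix (Fin S.m) (Fin S.n) ℝ)
    (K : ℕ → Fin S.L → Matrix (Fin S.m) (Fin S.m) ℝ)
    (x0 : Fin S.n → ℝ) (uinit : ℤ → Fin S.m → ℝ)
    (u : ℤ → Ω → Fin S.m → ℝ) : Prop :=
  HasInit S M uinit u ∧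
  ∀ k : ℕ, u (k : ℤ) = fun ω =>
    -((K0 (M.θ k ω)).mulVec (traj S M x0 u k ω))
      - ∑ r ∈ Finset.Icc 1 (S.d - 1), (K r (M.θ k ω)).mulVec (u ((k : ℤ) + r - S.d) ω)

/-- Mean square stabilizability of the MJLS with input delay. -/
def MJParams.MSStabilizable (S : MJParams) : Prop :=
  ∃ (K0 : Fin S.L → Matrix (Fin S.m) (Fin S.n) ℝ)
    (K : ℕ → Fin S.L → Matrix (Fin S.m) (Fin S.m) ℝ),
    ∀ {Ω : Type} [MeasurableSpace Ω] (M : MarkovChain S Ω) (x0 : Fin S.n → ℝ) (uinit : ℤ → Fin S.m → ℝ)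
      (u : ℤ → Ω → Fin S.m → ℝ), IsFeedback S M K0 K x0 uinit u →
      Tendsto (fun k : ℕ => ∫ ω, (∑ i, (traj S M x0 u k ω i) ^ 2) ∂M.μ) atTop (𝓝 0)

/-- The uncontrolled trajectory `x(k+1) = A_{θ(k)} x(k)`. -/
def trajU (S : MJParams) {Ω : Type} [MeasurableSpace Ω] (M : MarkovChain S Ω) (x0 : Fin S.n → ℝ) :
    ℕ → Ω → Fin S.n → ℝ
  | 0 => fun _ => x0
  | k + 1 => fun ω => (S.A (M.θ k ω)).mulVec (trajU S M x0 k ω)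

/-- Exact observability of `(A, C)`. -/
def MJParams.ExactlyObservable (S : MJParams) {p : ℕ}
    (C : Matrix (Fin p) (Fin S.n) ℝ) : Prop :=
  ∀ N : ℕ, S.n ≤ N → ∀ {Ω : Type} [MeasurableSpace Ω] (M : MarkovChain S Ω) (i0 : Fin S.L),
    M.μ {ω | M.θ 0 ω = i0} = 1 →
    ∀ x0 : Fin S.n → ℝ,
      (∀ k ≤ N, ∀ᵐ ω ∂M.μ, C.mulVec (trajU S M x0 k ω) = 0) → x0 = 0

/-- `u` is the closed-loop input under the stationary feedback controller `u*` built from a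
CARE solution. -/
def IsCareFeedback (S : MJParams) {Ω : Type} [MeasurableSpace Ω] (M : MarkovChain S Ω) (c : CARE S)
    (x0 : Fin S.n → ℝ) (uinit : ℤ → Fin S.m → ℝ)
    (u : ℤ → Ω → Fin S.m → ℝ) : Prop :=
  HasInit S M uinit u ∧
  ∀ k : ℕ, u (k : ℤ) = fun ω =>
    -(((c.W (M.θ k ω))⁻¹ * c.T0 (M.θ k ω) * S.A (M.θ k ω)).mulVec (traj S M x0 u k ω))
      - ((c.W (M.θ k ω))⁻¹ * c.T0 (M.θ k ω) * S.B (M.θ k ω)).mulVec (u ((k : ℤ) - S.d) ω)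
      - ∑ j ∈ Finset.Icc 1 (S.d - 1),
          ((c.W (M.θ k ω))⁻¹ * c.T j (M.θ k ω)).mulVec (u ((k : ℤ) - S.d + j) ω)

/-- The infinite-horizon cost `J(u)` (valued in `ℝ≥0∞`). -/
def Jinf (S : MJParams) {Ω : Type} [MeasurableSpace Ω] (M : MarkovChain S Ω) (x0 : Fin S.n → ℝ)
    (u : ℤ → Ω → Fin S.m → ℝ) : ℝ≥0∞ :=
  (∑' k : ℕ, ENNReal.ofReal
      (∫ ω, (traj S M x0 u k ω) ⬝ᵥ (S.Q.mulVec (traj S M x0 u k ω)) ∂M.μ))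
  + ∑' k : ℕ, ENNReal.ofReal
      (∫ ω, (u (k : ℤ) ω) ⬝ᵥ (S.R.mulVec (u (k : ℤ) ω)) ∂M.μ)

/-- The finite-horizon cost `J_N(u)`. -/
def Jfin (S : MJParams) {Ω : Type} [MeasurableSpace Ω] (M : MarkovChain S Ω) (N : ℕ) (x0 : Fin S.n → ℝ)
    (u : ℤ → Ω → Fin S.m → ℝ) : ℝ :=
  ∫ ω, ((∑ k ∈ Finset.range (N + 1),
        (traj S M x0 u k ω) ⬝ᵥ (S.Q.mulVec (traj S M x0 u k ω)))
      + ∑ k ∈ Finset.Icc S.d N,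
        (u ((k : ℤ) - S.d) ω) ⬝ᵥ (S.R.mulVec (u ((k : ℤ) - S.d) ω))) ∂M.μ

/-- The Lyapunov functional `V(k)` associated with a CARE solution and an input process. -/
def Vfun (S : MJParams) {Ω : Type} [MeasurableSpace Ω] (M : MarkovChain S Ω) (c : CARE S) (x0 : Fin S.n → ℝ)
    (u : ℤ → Ω → Fin S.m → ℝ) (k : ℕ) : ℝ :=
  (∫ ω, (traj S M x0 u k ω) ⬝ᵥ
      ((c.P (M.θ (k - 1) ω) - c.P0 (M.θ (k - 1) ω)).mulVec (traj S M x0 u k ω)) ∂M.μ)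
  - ∑ s ∈ Finset.Icc 1 (S.d - 1),
      ∫ ω,
        (condExp (M.G (k - s - 1)) M.μ
            (fun ω' => (c.α s (fun t : Fin s => M.θ (k - 1 - (t : ℕ)) ω')).mulVec
              (traj S M x0 u k ω')) ω)
          ⬝ᵥ ((c.W (M.θ (k - s - 1) ω))⁻¹.mulVec
            (condExp (M.G (k - s - 1)) M.μ
              (fun ω' => (c.α s (fun t : Fin s => M.θ (k - 1 - (t : ℕ)) ω')).mulVec
                (traj S M x0 u k ω')) ω)) ∂M.μ

/-- Index type for the augmented state `col(x(k), u(k-1), …, u(k-d))`: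
`inl` is the state block (block `0`), `inr (t, ·)` is block `t+1` (holding `u(k-t-1)`). -/
abbrev AugIx (S : MJParams) : Type := Fin S.n ⊕ (Fin S.d × Fin S.m)

/-- The augmented system matrix `Ā_i`. -/
def Abar (S : MJParams) (i : Fin S.L) : Matrix (AugIx S) (AugIx S) ℝ :=
  Matrix.of fun a b =>
    match a, b with
    | Sum.inl a, Sum.inl b => S.A i a b
    | Sum.inl a, Sum.inr (t, b) => if (t : ℕ) = S.d - 1 then S.B i a b else 0
    | Sum.inr _, Sum.inl _ => 0
    | Sum.inr (t, a), Sum.inr (s, b) => if (t : ℕ) = (s : ℕ) + 1 ∧ a = b then 1 else 0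

/-- The augmented input matrix `B̄`. -/
def Bbar (S : MJParams) : Matrix (AugIx S) (Fin S.m) ℝ :=
  Matrix.of fun a b =>
    match a with
    | Sum.inl _ => 0
    | Sum.inr (t, a) => if (t : ℕ) = 0 ∧ a = b then 1 else 0

/-- The augmented weight matrix `Q̄ = diag(Q, 0, …, 0)`. -/
def Qbar (S : MJParams) : Matrix (AugIx S) (AugIx S) ℝ :=
  Matrix.of fun a b =>
    match a, b with
    | Sum.inl a, Sum.inl b => S.Q a b
    | _, _ => 0

/-- The augmented coupled Riccati recursion with horizon `N`. -/
structure AugRic (S : MJParams) (N : ℕ) where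
  Pb : Fin S.L → ℕ → Matrix (AugIx S) (AugIx S) ℝ
  hterm : ∀ i, Pb i (N + 1) = 0
  hrec : ∀ i, ∀ k ≤ N, Pb i k =
    Qbar S + (Abar S i)ᵀ * (∑ j, S.Pr i j • Pb j (k + 1)) * Abar S i
      - ((Bbar S)ᵀ * (∑ j, S.Pr i j • Pb j (k + 1)) * Abar S i)ᵀ *
          (S.R + (Bbar S)ᵀ * (∑ j, S.Pr i j • Pb j (k + 1)) * Bbar S)⁻¹ *
          ((Bbar S)ᵀ * (∑ j, S.Pr i j • Pb j (k + 1)) * Abar S i)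

/-- `Ῡ_i(k)` of the augmented recursion. -/
def AugRic.Ups {S : MJParams} {N : ℕ} (a : AugRic S N) (i : Fin S.L) (k : ℕ) :
    Matrix (Fin S.m) (Fin S.m) ℝ :=
  S.R + (Bbar S)ᵀ * (∑ j, S.Pr i j • a.Pb j (k + 1)) * Bbar S

/-- Block `(1,0)` of an augmented matrix. -/
def blk10 (S : MJParams) (Pm : Matrix (AugIx S) (AugIx S) ℝ) :
    Matrix (Fin S.m) (Fin S.n) ℝ :=
  Matrix.of fun a b => Pm (Sum.inr (⟨0, S.hd⟩, a)) (Sum.inl b)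

/-- Block `(1,1)` of an augmented matrix. -/
def blk11 (S : MJParams) (Pm : Matrix (AugIx S) (AugIx S) ℝ) :
    Matrix (Fin S.m) (Fin S.m) ℝ :=
  Matrix.of fun a b => Pm (Sum.inr (⟨0, S.hd⟩, a)) (Sum.inr (⟨0, S.hd⟩, b))

/-- Block `(1, r+1)` of an augmented matrix (for `r < d`). -/
def blk1c (S : MJParams) (Pm : Matrix (AugIx S) (AugIx S) ℝ) (r : ℕ) :
    Matrix (Fin S.m) (Fin S.m) ℝ :=
  Matrix.of fun a b =>
    Pm (Sum.inr (⟨0, S.hd⟩, a)) (Sum.inr (if h : r < S.d then ⟨r, h⟩ else ⟨0, S.hd⟩, b))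

/-- The initial augmented state `col(x₀, u(-1), …, u(-d))`. -/
def augInit (S : MJParams) (x0 : Fin S.n → ℝ) (uinit : ℤ → Fin S.m → ℝ) :
    AugIx S → ℝ :=
  fun a =>
    match a with
    | Sum.inl a => x0 a
    | Sum.inr (t, b) => uinit (-(t : ℤ) - 1) b

end


section Aux
open MeasureTheory Matrix
open MeasureTheory Matrix

section Abstract

variable {Ωt : Type} {G m0 : MeasurableSpace Ωt} {μ : Measure Ωt} [IsProbabilityMeasure μ]

lemma my_integrable_of_bdd {E : Type*} [NormedAddCommGroup E] {f : Ωt → E}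
    (hm : AEStronglyMeasurable f μ) {C : ℝ} (h : ∀ ω, ‖f ω‖ ≤ C) : Integrable f μ :=
  ⟨hm, HasFiniteIntegral.of_bounded (Filter.Eventually.of_forall h)⟩

/-- Scalar conditional Jensen on a set. -/
lemma sq_condexp_setIntegral_le (hG : G ≤ m0)
    {u : Ωt → ℝ} (hum : Measurable[m0] u) {C : ℝ} (hCnn : 0 ≤ C) (hub : ∀ ω, |u ω| ≤ C)
    {A : Set Ωt} (hA : MeasurableSet[G] A) :
    ∫ ω in A, (condExp G μ u ω) ^ 2 ∂μ ≤ ∫ ω in A, (u ω) ^ 2 ∂μ := by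
  haveI : SigmaFinite (μ.trim hG) := inferInstance
  set v := condExp G μ u with hv
  have hubR : ∀ᵐ ω ∂μ, |u ω| ≤ (⟨C, hCnn⟩ : NNReal) := Filter.Eventually.of_forall hub
  have hvb : ∀ᵐ ω ∂μ, |v ω| ≤ C := ae_bdd_condExp_of_ae_bdd hubR
  have hum' : AEStronglyMeasurable u μ := hum.aestronglyMeasurable
  have hui : Integrable u μ := my_integrable_of_bdd hum' (by simpa using hub)
  have hvm : AEStronglyMeasurable v μ :=
    (stronglyMeasurable_condExp.mono hG).aestronglyMeasurable
  set w : Ωt → ℝ := A.indicator v with hw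
  have hwsm : StronglyMeasurable[G] w := stronglyMeasurable_condExp.indicator hA
  have hwm : AEStronglyMeasurable w μ := (hwsm.mono hG).aestronglyMeasurable
  have hwb : ∀ᵐ ω ∂μ, |w ω| ≤ C := by
    filter_upwards [hvb] with ω hω
    by_cases h : ω ∈ A <;>
      simp [hw, Set.indicator_of_mem, Set.indicator_of_notMem, h, hCnn, hω]
  have habs : ∀ {a b : ℝ}, |a| ≤ C → |b| ≤ C → ‖a * b‖ ≤ C * C := by
    intro a b ha hb
    rw [Real.norm_eq_abs, abs_mul]
    exact mul_le_mul ha hb (abs_nonneg _) hCnn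
  have hwu_i : Integrable (fun ω => w ω * u ω) μ := by
    refine Integrable.mono' (g := fun _ => C * C)
      (integrable_const _) (hwm.mul hum') ?_
    filter_upwards [hwb] with ω hω using habs hω (hub ω)
  have h1 : ∫ ω, w ω * u ω ∂μ = ∫ ω, w ω * v ω ∂μ := by
    have h2 : condExp G μ (fun ω => w ω * u ω) =ᵐ[μ] fun ω => w ω * v ω :=
      condExp_mul_of_stronglyMeasurable_left hwsm hwu_i hui
    calc ∫ ω, w ω * u ω ∂μ = ∫ ω, condExp G μ (fun ω => w ω * u ω) ω ∂μ :=
          (integral_condExp hG).symm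
      _ = ∫ ω, w ω * v ω ∂μ := integral_congr_ae h2
  have hAm : MeasurableSet[m0] A := hG A hA
  have hind : ∀ g : Ωt → ℝ, (∫ ω, w ω * g ω ∂μ) = ∫ ω in A, v ω * g ω ∂μ := by
    intro g
    rw [← integral_indicator hAm]
    congr 1
    funext ω
    by_cases h : ω ∈ A <;>
      simp [hw, Set.indicator_of_mem, Set.indicator_of_notMem, h]
  have h3 : ∫ ω in A, v ω * u ω ∂μ = ∫ ω in A, v ω * v ω ∂μ := by
    rw [← hind u, ← hind v, h1]
  have hu2 : Integrable (fun ω => (u ω) ^ 2) μ := by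
    refine my_integrable_of_bdd ((hum.pow_const 2).aestronglyMeasurable) (C := C * C) ?_
    intro ω; simpa [pow_two] using habs (hub ω) (hub ω)
  have hv2 : Integrable (fun ω => v ω * v ω) μ := by
    refine Integrable.mono' (g := fun _ => C * C) (integrable_const _) (hvm.mul hvm) ?_
    filter_upwards [hvb] with ω hω using habs hω hω
  have hvu : Integrable (fun ω => v ω * u ω) μ := by
    refine Integrable.mono' (g := fun _ => C * C) (integrable_const _) (hvm.mul hum') ?_
    filter_upwards [hvb] with ω hω using habs hω (hub ω)
  have hnn : 0 ≤ ∫ ω in A, (u ω - v ω) ^ 2 ∂μ :=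
    integral_nonneg fun ω => sq_nonneg _
  have hsplit : ∫ ω in A, (u ω - v ω) ^ 2 ∂μ
      = ((∫ ω in A, (u ω) ^ 2 ∂μ) - 2 * (∫ ω in A, v ω * u ω ∂μ))
        + ∫ ω in A, v ω * v ω ∂μ := by
    have e1 : Integrable (fun ω => (u ω) ^ 2 - 2 * (v ω * u ω)) (μ.restrict A) :=
      hu2.integrableOn.sub ((hvu.integrableOn).const_mul 2)
    calc ∫ ω in A, (u ω - v ω) ^ 2 ∂μ
        = ∫ ω in A, (((u ω) ^ 2 - 2 * (v ω * u ω)) + v ω * v ω) ∂μ := by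
          apply integral_congr_ae; filter_upwards with ω; ring
      _ = (∫ ω in A, ((u ω) ^ 2 - 2 * (v ω * u ω)) ∂μ) + ∫ ω in A, v ω * v ω ∂μ :=
          integral_add e1 hv2.integrableOn
      _ = ((∫ ω in A, (u ω) ^ 2 ∂μ) - 2 * (∫ ω in A, v ω * u ω ∂μ))
            + ∫ ω in A, v ω * v ω ∂μ := by
          rw [integral_sub hu2.integrableOn ((hvu.integrableOn).const_mul 2),
            integral_const_mul]
  have hfin : ∫ ω in A, (v ω) ^ 2 ∂μ = ∫ ω in A, v ω * v ω ∂μ := by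
    simp_rw [pow_two]
  rw [hfin]
  rw [h3] at hsplit
  linarith

end Abstract

section More
variable {Ωt : Type} {G m0 : MeasurableSpace Ωt} {μ : Measure Ωt} [IsProbabilityMeasure μ]

lemma condexp_clm {q : ℕ} (hG : G ≤ m0) {f : Ωt → Fin q → ℝ} (hf : Integrable f μ)
    (L : (Fin q → ℝ) →L[ℝ] ℝ) :
    (fun ω => L (condExp G μ f ω)) =ᵐ[μ] condExp G μ (fun ω => L (f ω)) := by
  haveI : SigmaFinite (μ.trim hG) := inferInstance
  refine ae_eq_condExp_of_forall_setIntegral_eq hG (L.integrable_comp hf)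
    (fun s _ _ => (L.integrable_comp integrable_condExp).integrableOn)
    (fun s hs _ => ?_) ?_
  · rw [L.integral_comp_comm integrable_condExp.integrableOn,
      L.integral_comp_comm hf.integrableOn, setIntegral_condExp hG hf hs]
  · exact StronglyMeasurable.aestronglyMeasurable (L.continuous.comp_stronglyMeasurable
      (stronglyMeasurable_condExp (f := f)))

end More

section QuadBounds

lemma quad_abs_le_sum_sq {q : ℕ} (N : Matrix (Fin q) (Fin q) ℝ) (x : Fin q → ℝ) :
    abs (x ⬝ᵥ N.mulVec x) ≤ (∑ p, ∑ j, |N p j|) * ∑ i, (x i) ^ 2 := by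
  have hS : ∀ p j : Fin q, |x p| * |x j| ≤ ∑ i, (x i) ^ 2 := by
    intro p j
    have h1 : |x p| * |x j| ≤ (|x p| ^ 2 + |x j| ^ 2) / 2 := by nlinarith [sq_nonneg (|x p| - |x j|)]
    have h2 : |x p| ^ 2 ≤ ∑ i, (x i) ^ 2 := by
      rw [sq_abs]; exact Finset.single_le_sum (fun i _ => sq_nonneg (x i)) (Finset.mem_univ p)
    have h3 : |x j| ^ 2 ≤ ∑ i, (x i) ^ 2 := by
      rw [sq_abs]; exact Finset.single_le_sum (fun i _ => sq_nonneg (x i)) (Finset.mem_univ j)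
    linarith
  have expand : x ⬝ᵥ N.mulVec x = ∑ p, ∑ j, x p * (N p j * x j) := by
    simp [dotProduct, Matrix.mulVec, Finset.mul_sum]
  rw [expand, Finset.sum_mul]
  refine (Finset.abs_sum_le_sum_abs _ _).trans (Finset.sum_le_sum fun p _ => ?_)
  rw [Finset.sum_mul]
  refine (Finset.abs_sum_le_sum_abs _ _).trans (Finset.sum_le_sum fun j _ => ?_)
  have : |x p * (N p j * x j)| = |N p j| * (|x p| * |x j|) := by
    rw [abs_mul, abs_mul]; ring
  rw [this]
  exact mul_le_mul_of_nonneg_left (hS p j) (abs_nonneg _)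

lemma quad_abs_le_const {q : ℕ} (N : Matrix (Fin q) (Fin q) ℝ) (x : Fin q → ℝ)
    {C : ℝ} (hC : 0 ≤ C) (hb : ∀ p, |x p| ≤ C) :
    abs (x ⬝ᵥ N.mulVec x) ≤ (∑ p, ∑ j, |N p j|) * ((q : ℝ) * (C * C)) := by
  refine (quad_abs_le_sum_sq N x).trans (mul_le_mul_of_nonneg_left ?_ ?_)
  · calc ∑ i, (x i) ^ 2 ≤ ∑ _i : Fin q, C * C := by
          refine Finset.sum_le_sum fun i _ => ?_
          rw [pow_two]
          calc x i * x i ≤ |x i * x i| := le_abs_self _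
            _ = |x i| * |x i| := abs_mul _ _
            _ ≤ C * C := mul_le_mul (hb i) (hb i) (abs_nonneg _) hC
      _ = (q : ℝ) * (C * C) := by simp [Finset.sum_const, mul_comm]
  · positivity

end QuadBounds

section PSD
open scoped MatrixOrder
variable {Ωt : Type} {G m0 : MeasurableSpace Ωt} {μ : Measure Ωt} [IsProbabilityMeasure μ]

lemma my_integrable_of_bdd' {E : Type*} [NormedAddCommGroup E] {f : Ωt → E}
    (hm : AEStronglyMeasurable f μ) {C : ℝ} (h : ∀ ω, ‖f ω‖ ≤ C) : Integrable f μ :=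
  ⟨hm, HasFiniteIntegral.of_bounded (Filter.Eventually.of_forall h)⟩

lemma quad_eq_sum_sq {q : ℕ} {D : Matrix (Fin q) (Fin q) ℝ} (hD : D.PosSemidef)
    (x : Fin q → ℝ) :
    x ⬝ᵥ D.mulVec x = ∑ p, ((CFC.sqrt D).mulVec x p) ^ 2 := by
  set s := CFC.sqrt D with hs
  have hsym : sᵀ = s := by
    have h2 := (Matrix.nonneg_iff_posSemidef.mp (CFC.sqrt_nonneg D)).isHermitian
    rwa [Matrix.IsHermitian, Matrix.conjTranspose_eq_transpose_of_trivial] at h2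
  have hDs : D = s * s := (CFC.sqrt_mul_sqrt_self D (Matrix.nonneg_iff_posSemidef.mpr hD)).symm
  rw [hDs, ← Matrix.mulVec_mulVec, Matrix.dotProduct_mulVec, ← hsym,
    Matrix.vecMul_transpose]
  simp [dotProduct, pow_two, hsym]

lemma setIntegral_condexp_quad_le {q : ℕ} (hG : G ≤ m0)
    {D : Matrix (Fin q) (Fin q) ℝ} (hD : D.PosSemidef)
    {f : Ωt → Fin q → ℝ} (hfm : Measurable[m0] f) {C : ℝ} (hCnn : 0 ≤ C)
    (hfb : ∀ ω p, |f ω p| ≤ C)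
    {A : Set Ωt} (hA : MeasurableSet[G] A) :
    ∫ ω in A, (condExp G μ f ω) ⬝ᵥ (D.mulVec (condExp G μ f ω)) ∂μ
      ≤ ∫ ω in A, (f ω) ⬝ᵥ (D.mulVec (f ω)) ∂μ := by
  haveI : SigmaFinite (μ.trim hG) := inferInstance
  set g := condExp G μ f with hg
  set s := CFC.sqrt D with hsdef
  have hfae : AEStronglyMeasurable f μ := hfm.aestronglyMeasurable
  have hfi : Integrable f μ := my_integrable_of_bdd hfae (C := C) (fun ω => by
    rw [pi_norm_le_iff_of_nonneg hCnn]; intro p; rw [Real.norm_eq_abs]; exact hfb ω p)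
  set L : Fin q → ((Fin q → ℝ) →L[ℝ] ℝ) := fun p =>
    LinearMap.toContinuousLinearMap ((LinearMap.proj p).comp s.mulVecLin) with hL
  have hLapply : ∀ (p : Fin q) (x : Fin q → ℝ), L p x = s.mulVec x p := fun p x => rfl
  set C2 := (∑ a, ∑ b, |s a b|) * C with hC2
  have hC2nn : 0 ≤ C2 :=
    mul_nonneg (Finset.sum_nonneg fun a _ => Finset.sum_nonneg fun b _ => abs_nonneg _) hCnn
  have hub : ∀ (p : Fin q) ω, |L p (f ω)| ≤ C2 := by
    intro p ω
    rw [hLapply]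
    calc |s.mulVec (f ω) p| = |∑ j, s p j * f ω j| := by simp [Matrix.mulVec, dotProduct]
      _ ≤ ∑ j, |s p j * f ω j| := Finset.abs_sum_le_sum_abs _ _
      _ ≤ ∑ j, |s p j| * C := by
          refine Finset.sum_le_sum fun j _ => ?_
          rw [abs_mul]; exact mul_le_mul_of_nonneg_left (hfb ω j) (abs_nonneg _)
      _ = (∑ j, |s p j|) * C := by rw [Finset.sum_mul]
      _ ≤ C2 := by
          refine mul_le_mul_of_nonneg_right ?_ hCnn
          exact Finset.single_le_sum (f := fun a => ∑ b, |s a b|)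
            (fun a _ => Finset.sum_nonneg fun b _ => abs_nonneg _) (Finset.mem_univ p)
  have hum : ∀ p : Fin q, Measurable[m0] (fun ω => L p (f ω)) := fun p =>
    (L p).continuous.measurable.comp hfm
  have hcondLp : ∀ p : Fin q, (fun ω => L p (g ω)) =ᵐ[μ] condExp G μ (fun ω => L p (f ω)) :=
    fun p => condexp_clm hG hfi (L p)
  have hgsm : StronglyMeasurable[G] g := stronglyMeasurable_condExp
  have hgm : Measurable[m0] g := (hgsm.mono hG).measurable
  -- integrability of the squares
  have hif : ∀ p : Fin q, Integrable (fun ω => (L p (f ω)) ^ 2) μ := by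
    intro p
    refine my_integrable_of_bdd (((hum p).pow_const 2).aestronglyMeasurable) (C := C2 * C2) ?_
    intro ω
    rw [Real.norm_eq_abs, pow_two, abs_mul]
    exact mul_le_mul (hub p ω) (hub p ω) (abs_nonneg _) hC2nn
  have hgb : ∀ p : Fin q, ∀ᵐ ω ∂μ, |L p (g ω)| ≤ C2 := by
    intro p
    have h1 : ∀ᵐ ω ∂μ, |condExp G μ (fun ω => L p (f ω)) ω| ≤ ((⟨C2, hC2nn⟩ : NNReal) : ℝ) :=
      ae_bdd_condExp_of_ae_bdd (Filter.Eventually.of_forall fun ω => hub p ω)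
    filter_upwards [h1, hcondLp p] with ω h1 h2
    rw [h2]; exact h1
  have hig : ∀ p : Fin q, Integrable (fun ω => (L p (g ω)) ^ 2) μ := by
    intro p
    have hm2 : Measurable[m0] (fun ω => L p (g ω)) := (L p).continuous.measurable.comp hgm
    refine Integrable.mono' (g := fun _ => C2 * C2) (integrable_const _)
      ((hm2.pow_const 2).aestronglyMeasurable) ?_
    filter_upwards [hgb p] with ω hω
    rw [Real.norm_eq_abs, pow_two, abs_mul]
    exact mul_le_mul hω hω (abs_nonneg _) hC2nn
  have hquadf : ∀ ω, (f ω) ⬝ᵥ (D.mulVec (f ω)) = ∑ p, (L p (f ω)) ^ 2 := fun ω => by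
    rw [quad_eq_sum_sq hD]
    exact Finset.sum_congr rfl fun p _ => by rw [hLapply, hsdef]
  have hquadg : ∀ ω, (g ω) ⬝ᵥ (D.mulVec (g ω)) = ∑ p, (L p (g ω)) ^ 2 := fun ω => by
    rw [quad_eq_sum_sq hD]
    exact Finset.sum_congr rfl fun p _ => by rw [hLapply, hsdef]
  have hmid : ∀ p : Fin q, ∫ ω in A, (L p (g ω)) ^ 2 ∂μ ≤ ∫ ω in A, (L p (f ω)) ^ 2 ∂μ := by
    intro p
    have hcong : (fun ω => (L p (g ω)) ^ 2)
        =ᵐ[μ.restrict A] (fun ω => (condExp G μ (fun ω => L p (f ω)) ω) ^ 2) := by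
      exact ae_restrict_of_ae ((hcondLp p).mono fun ω h => by dsimp only; dsimp only at h; rw [h])
    rw [integral_congr_ae hcong]
    exact sq_condexp_setIntegral_le hG (hum p) hC2nn (fun ω => hub p ω) hA
  calc ∫ ω in A, (g ω) ⬝ᵥ (D.mulVec (g ω)) ∂μ
      = ∫ ω in A, ∑ p, (L p (g ω)) ^ 2 ∂μ := by simp_rw [hquadg]
    _ = ∑ p, ∫ ω in A, (L p (g ω)) ^ 2 ∂μ :=
        integral_finset_sum _ (fun p _ => (hig p).integrableOn)
    _ ≤ ∑ p, ∫ ω in A, (L p (f ω)) ^ 2 ∂μ := Finset.sum_le_sum fun p _ => hmid p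
    _ = ∫ ω in A, ∑ p, (L p (f ω)) ^ 2 ∂μ :=
        (integral_finset_sum _ (fun p _ => (hif p).integrableOn)).symm
    _ = ∫ ω in A, (f ω) ⬝ᵥ (D.mulVec (f ω)) ∂μ := by simp_rw [hquadf]

end PSD

section Key
variable {Ωt : Type} {G m0 : MeasurableSpace Ωt} {μ : Measure Ωt} [IsProbabilityMeasure μ]

lemma integral_eq_sum_fiber {Lc : ℕ} {τ : Ωt → Fin Lc} (hτ : Measurable[m0] τ)
    {F : Ωt → ℝ} (hF : Integrable F μ) :
    ∫ ω, F ω ∂μ = ∑ i, ∫ ω in τ ⁻¹' {i}, F ω ∂μ := by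
  have hpt : ∀ ω, F ω = ∑ i, (τ ⁻¹' {i} : Set Ωt).indicator F ω := by
    intro ω
    rw [Finset.sum_eq_single (τ ω)]
    · rw [Set.indicator_of_mem (by simp : ω ∈ τ ⁻¹' {τ ω})]
    · intro i _ hne
      exact Set.indicator_of_notMem (by simp [Ne.symm hne]) F
    · intro h; exact absurd (Finset.mem_univ _) h
  calc ∫ ω, F ω ∂μ = ∫ ω, ∑ i, (τ ⁻¹' {i} : Set Ωt).indicator F ω ∂μ :=
        integral_congr_ae (Filter.Eventually.of_forall hpt)
    _ = ∑ i, ∫ ω, (τ ⁻¹' {i} : Set Ωt).indicator F ω ∂μ :=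
        integral_finset_sum _ fun i _ => hF.indicator (hτ (measurableSet_singleton i))
    _ = ∑ i, ∫ ω in τ ⁻¹' {i}, F ω ∂μ := by
        exact Finset.sum_congr rfl fun i _ =>
          integral_indicator (hτ (measurableSet_singleton i))

lemma key_jensen {Lc q : ℕ} (hG : G ≤ m0) {τ : Ωt → Fin Lc} (hτ : Measurable[G] τ)
    {D : Fin Lc → Matrix (Fin q) (Fin q) ℝ} (hD : ∀ i, (D i).PosSemidef)
    {f : Ωt → Fin q → ℝ} (hfm : Measurable[m0] f) {C : ℝ} (hCnn : 0 ≤ C)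
    (hfb : ∀ ω p, |f ω p| ≤ C) :
    ∫ ω, (condExp G μ f ω) ⬝ᵥ ((D (τ ω)).mulVec (condExp G μ f ω)) ∂μ
      ≤ ∫ ω, (f ω) ⬝ᵥ ((D (τ ω)).mulVec (f ω)) ∂μ := by
  haveI : SigmaFinite (μ.trim hG) := inferInstance
  set g := condExp G μ f with hg
  have hτ0 : Measurable[m0] τ := hτ.mono hG le_rfl
  have hgm : Measurable[m0] g := (stronglyMeasurable_condExp.mono hG).measurable
  have hfi : Integrable f μ := my_integrable_of_bdd (hfm.aestronglyMeasurable) (C := C)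
    (fun ω => by rw [pi_norm_le_iff_of_nonneg hCnn]; intro p; rw [Real.norm_eq_abs];
                 exact hfb ω p)
  have hgb : ∀ᵐ ω ∂μ, ∀ p, |g ω p| ≤ C := by
    rw [MeasureTheory.ae_all_iff]
    intro p
    have hclm := condexp_clm hG hfi (ContinuousLinearMap.proj (R := ℝ) (φ := fun _ : Fin q => ℝ) p)
    have hbd : ∀ᵐ ω ∂μ,
        |condExp G μ (fun ω => (ContinuousLinearMap.proj (R := ℝ) (φ := fun _ : Fin q => ℝ) p) (f ω)) ω|
          ≤ ((⟨C, hCnn⟩ : NNReal) : ℝ) :=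
      ae_bdd_condExp_of_ae_bdd (Filter.Eventually.of_forall fun ω => by
        exact hfb ω p)
    filter_upwards [hclm, hbd] with ω h1 h2
    have : g ω p = condExp G μ (fun ω => (ContinuousLinearMap.proj (R := ℝ) (φ := fun _ : Fin q => ℝ) p) (f ω)) ω := h1
    rw [this]; exact h2
  -- sums of |D| entries
  set SD := ∑ i, ∑ p, ∑ j, |D i p j| with hSD
  have hSDnn : ∀ i, (0:ℝ) ≤ ∑ p, ∑ j, |D i p j| :=
    fun i => Finset.sum_nonneg fun p _ => Finset.sum_nonneg fun j _ => abs_nonneg _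
  have hSDi : ∀ i, ∑ p, ∑ j, |D i p j| ≤ SD :=
    fun i => Finset.single_le_sum (f := fun i => ∑ p, ∑ j, |D i p j|)
      (fun i _ => hSDnn i) (Finset.mem_univ i)
  set CB := SD * ((q:ℝ) * (C * C)) with hCB
  have hqb : ∀ (x : Fin q → ℝ), (∀ p, |x p| ≤ C) → ∀ i : Fin Lc,
      abs (x ⬝ᵥ (D i).mulVec x) ≤ CB := by
    intro x hx i
    refine (quad_abs_le_const (D i) x hCnn hx).trans ?_
    exact mul_le_mul_of_nonneg_right (hSDi i) (by positivity)
  -- measurability of the quadratic integrands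
  have key_meas : ∀ (h : Ωt → Fin q → ℝ), Measurable[m0] h →
      Measurable[m0] (fun ω => (h ω) ⬝ᵥ ((D (τ ω)).mulVec (h ω))) := by
    intro h hh
    have heq : (fun ω => (h ω) ⬝ᵥ ((D (τ ω)).mulVec (h ω)))
        = fun ω => ∑ p, h ω p * ∑ j, D (τ ω) p j * h ω j := by
      funext ω; simp [dotProduct, Matrix.mulVec]
    rw [heq]
    exact Finset.measurable_sum _ fun p _ =>
      ((measurable_pi_apply p).comp hh).mul
        (Finset.measurable_sum _ fun j _ =>
          ((measurable_of_countable (fun i => D i p j)).comp hτ0).mul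
            ((measurable_pi_apply j).comp hh))
  have hΦf_i : Integrable (fun ω => (f ω) ⬝ᵥ ((D (τ ω)).mulVec (f ω))) μ := by
    refine my_integrable_of_bdd ((key_meas f hfm).aestronglyMeasurable) (C := CB) ?_
    intro ω; rw [Real.norm_eq_abs]; exact hqb (f ω) (fun p => hfb ω p) (τ ω)
  have hΦg_i : Integrable (fun ω => (g ω) ⬝ᵥ ((D (τ ω)).mulVec (g ω))) μ := by
    refine Integrable.mono' (g := fun _ => CB) (integrable_const _)
      ((key_meas g hgm).aestronglyMeasurable) ?_
    filter_upwards [hgb] with ω hω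
    rw [Real.norm_eq_abs]; exact hqb (g ω) hω (τ ω)
  rw [integral_eq_sum_fiber hτ0 hΦf_i, integral_eq_sum_fiber hτ0 hΦg_i]
  refine Finset.sum_le_sum fun i _ => ?_
  have hAi : MeasurableSet[G] (τ ⁻¹' {i}) := hτ (measurableSet_singleton i)
  have hAm : MeasurableSet[m0] (τ ⁻¹' {i}) := hG _ hAi
  have e1 : ∫ ω in τ ⁻¹' {i}, (g ω) ⬝ᵥ ((D (τ ω)).mulVec (g ω)) ∂μ
      = ∫ ω in τ ⁻¹' {i}, (g ω) ⬝ᵥ ((D i).mulVec (g ω)) ∂μ :=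
    setIntegral_congr_fun hAm (fun ω hω => by rw [Set.mem_preimage, Set.mem_singleton_iff] at hω; rw [hω])
  have e2 : ∫ ω in τ ⁻¹' {i}, (f ω) ⬝ᵥ ((D (τ ω)).mulVec (f ω)) ∂μ
      = ∫ ω in τ ⁻¹' {i}, (f ω) ⬝ᵥ ((D i).mulVec (f ω)) ∂μ :=
    setIntegral_congr_fun hAm (fun ω hω => by rw [Set.mem_preimage, Set.mem_singleton_iff] at hω; rw [hω])
  rw [e1, e2]
  exact setIntegral_condexp_quad_le hG (hD i) hfm hCnn hfb hAi

end Key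


section Domain
open MeasureTheory Matrix

variable {S : MJParams} {Ωo : Type} [mΩ : MeasurableSpace Ωo]

lemma MJ.G_le (M : MarkovChain S Ωo) (j : ℕ) : M.G j ≤ mΩ := by
  refine iSup_le fun t => iSup_le fun _ => ?_
  exact measurable_iff_comap_le.mp (M.hθ t)

lemma MJ.theta_mble_G (M : MarkovChain S Ωo) {t j : ℕ} (h : t ≤ j) :
    Measurable[M.G j] (M.θ t) := by
  rw [measurable_iff_comap_le]
  exact le_iSup₂ (f := fun (t : ℕ) (_ : t ∈ Finset.range (j + 1)) =>
    MeasurableSpace.comap (M.θ t) ⊤) t (Finset.mem_range.mpr (by omega))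

lemma MJ.bdd_of_measurable_G (M : MarkovChain S Ωo) {q : ℕ} (j : ℕ)
    {F : Ωo → Fin q → ℝ} (hF : Measurable[M.G j] F) :
    ∃ C, 0 ≤ C ∧ ∀ ω p, |F ω p| ≤ C := by
  classical
  set T : Ωo → (Fin (j + 1) → Fin S.L) := fun ω t => M.θ t ω with hT
  have hle : M.G j ≤ MeasurableSpace.comap T ⊤ := by
    refine iSup_le fun t => iSup_le fun ht => ?_
    rw [Finset.mem_range] at ht
    have he : M.θ t = (fun v : Fin (j + 1) → Fin S.L => v ⟨t, ht⟩) ∘ T := rfl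
    rw [he, ← MeasurableSpace.comap_comp]
    exact MeasurableSpace.comap_mono le_top
  have hF' : Measurable[MeasurableSpace.comap T ⊤] F := hF.mono hle le_rfl
  have hconst : ∀ ω ω', T ω = T ω' → F ω = F ω' := by
    intro ω ω' hTe
    have hs : MeasurableSet[MeasurableSpace.comap T ⊤] (F ⁻¹' {F ω'}) :=
      hF' (measurableSet_singleton _)
    obtain ⟨s, -, hs⟩ := hs
    have hω' : ω' ∈ T ⁻¹' s := by
      rw [hs]; exact Set.mem_singleton _
    have hω : ω ∈ T ⁻¹' s := by rwa [Set.mem_preimage, hTe, ← Set.mem_preimage]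
    rw [hs] at hω
    exact hω
  set g : (Fin (j + 1) → Fin S.L) → (Fin q → ℝ) := fun v =>
    if h : ∃ ω, T ω = v then F h.choose else 0 with hgdef
  have hFg : ∀ ω, F ω = g (T ω) := by
    intro ω
    have h : ∃ ω', T ω' = T ω := ⟨ω, rfl⟩
    rw [hgdef]; dsimp only
    rw [dif_pos h]
    exact (hconst h.choose ω h.choose_spec).symm
  refine ⟨∑ v, ∑ p, |g v p|, by positivity, fun ω p => ?_⟩
  rw [hFg ω]
  calc |g (T ω) p| ≤ ∑ p', |g (T ω) p'| :=
        Finset.single_le_sum (f := fun p' => |g (T ω) p'|)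
          (fun _ _ => abs_nonneg _) (Finset.mem_univ p)
    _ ≤ ∑ v, ∑ p', |g v p'| :=
        Finset.single_le_sum (f := fun v => ∑ p', |g v p'|)
          (fun _ _ => Finset.sum_nonneg fun _ _ => abs_nonneg _) (Finset.mem_univ (T ω))

lemma MJ.measurable_matvec {I : Type*} [Countable I] [MeasurableSpace I]
    [MeasurableSingletonClass I] {a b : ℕ}
    (N : I → Matrix (Fin a) (Fin b) ℝ) {ι : Ωo → I} (hι : Measurable ι)
    {v : Ωo → Fin b → ℝ} (hv : Measurable v) :
    Measurable (fun ω => (N (ι ω)).mulVec (v ω)) := by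
  apply measurable_pi_lambda
  intro p
  have he : (fun ω => (N (ι ω)).mulVec (v ω) p) = fun ω => ∑ j, N (ι ω) p j * v ω j := by
    funext ω; simp [Matrix.mulVec, dotProduct]
  show Measurable fun ω => (N (ι ω)).mulVec (v ω) p
  rw [he]
  exact Finset.measurable_sum _ fun j _ =>
    ((measurable_of_countable fun i => N i p j).comp hι).mul
      ((measurable_pi_apply j).comp hv)

lemma MJ.measurable_dot {a : ℕ} {v w : Ωo → Fin a → ℝ}
    (hv : Measurable v) (hw : Measurable w) :
    Measurable (fun ω => (v ω) ⬝ᵥ (w ω)) := by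
  have he : (fun ω => (v ω) ⬝ᵥ (w ω)) = fun ω => ∑ j, v ω j * w ω j := by
    funext ω; simp [dotProduct]
  rw [he]
  exact Finset.measurable_sum _ fun j _ =>
    ((measurable_pi_apply j).comp hv).mul ((measurable_pi_apply j).comp hw)

lemma MJ.matvec_bound {a b : ℕ} {N : Matrix (Fin a) (Fin b) ℝ} {CN Cv : ℝ}
    (hN : ∀ p j, |N p j| ≤ CN) {v : Fin b → ℝ} (hv : ∀ j, |v j| ≤ Cv)
    (h1 : 0 ≤ CN) (h2 : 0 ≤ Cv) (p : Fin a) :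
    |N.mulVec v p| ≤ (b : ℝ) * CN * Cv := by
  have he : N.mulVec v p = ∑ j, N p j * v j := by simp [Matrix.mulVec, dotProduct]
  rw [he]
  calc |∑ j, N p j * v j| ≤ ∑ j, |N p j * v j| := Finset.abs_sum_le_sum_abs _ _
    _ ≤ ∑ _j : Fin b, CN * Cv := by
        refine Finset.sum_le_sum fun j _ => ?_
        rw [abs_mul]
        exact mul_le_mul (hN p j) (hv j) (abs_nonneg _) h1
    _ = (b : ℝ) * CN * Cv := by simp [Finset.sum_const, mul_assoc]

end Domain

section Traj
open MeasureTheory Matrix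
variable {S : MJParams} {Ωo : Type} [mΩ : MeasurableSpace Ωo]

lemma MJ.entry_le_sum3 {I P J : Type*} [Fintype I] [Fintype P] [Fintype J]
    (A : I → P → J → ℝ) (l : I) (p : P) (j : J) :
    |A l p j| ≤ ∑ l', ∑ p', ∑ j', |A l' p' j'| := by
  calc |A l p j| ≤ ∑ j', |A l p j'| :=
        Finset.single_le_sum (f := fun j' => |A l p j'|) (fun _ _ => abs_nonneg _)
          (Finset.mem_univ j)
    _ ≤ ∑ p', ∑ j', |A l p' j'| :=
        Finset.single_le_sum (f := fun p' => ∑ j', |A l p' j'|)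
          (fun _ _ => Finset.sum_nonneg fun _ _ => abs_nonneg _) (Finset.mem_univ p)
    _ ≤ ∑ l', ∑ p', ∑ j', |A l' p' j'| :=
        Finset.single_le_sum (f := fun l' => ∑ p', ∑ j', |A l' p' j'|)
          (fun _ _ => Finset.sum_nonneg fun _ _ => Finset.sum_nonneg fun _ _ => abs_nonneg _)
          (Finset.mem_univ l)

lemma MJ.u_meas_bdd (M : MarkovChain S Ωo) {uinit : ℤ → Fin S.m → ℝ}
    {u : ℤ → Ωo → Fin S.m → ℝ}
    (hinit : HasInit S M uinit u) (hu : ∀ k : ℕ, Measurable[M.G k] (u (k : ℤ)))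
    (t : ℤ) (ht : -(S.d : ℤ) ≤ t) :
    Measurable (u t) ∧ ∃ C, 0 ≤ C ∧ ∀ ω p, |u t ω p| ≤ C := by
  rcases lt_or_ge t 0 with h | h
  · rw [hinit t ht h]
    exact ⟨measurable_const, ∑ p, |uinit t p|, by positivity, fun ω p =>
      Finset.single_le_sum (f := fun p => |uinit t p|) (fun _ _ => abs_nonneg _)
        (Finset.mem_univ p)⟩
  · obtain ⟨k, rfl⟩ := Int.eq_ofNat_of_zero_le h
    obtain ⟨C, hC0, hC⟩ := MJ.bdd_of_measurable_G M k (hu k)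
    exact ⟨(hu k).mono (MJ.G_le M k) le_rfl, C, hC0, hC⟩

lemma MJ.traj_meas_bdd (M : MarkovChain S Ωo) {x0 : Fin S.n → ℝ}
    {uinit : ℤ → Fin S.m → ℝ} {u : ℤ → Ωo → Fin S.m → ℝ}
    (hinit : HasInit S M uinit u) (hu : ∀ k : ℕ, Measurable[M.G k] (u (k : ℤ)))
    (k : ℕ) :
    Measurable (traj S M x0 u k) ∧ ∃ C, 0 ≤ C ∧ ∀ ω i, |traj S M x0 u k ω i| ≤ C := by
  induction k with
  | zero =>
    exact ⟨measurable_const, ∑ i, |x0 i|, by positivity, fun ω i =>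
      Finset.single_le_sum (f := fun i => |x0 i|) (fun _ _ => abs_nonneg _)
        (Finset.mem_univ i)⟩
  | succ k ih =>
    obtain ⟨hxm, Cx, hCx0, hCx⟩ := ih
    have htk : -(S.d : ℤ) ≤ (k : ℤ) - S.d := by omega
    obtain ⟨hum, Cu, hCu0, hCu⟩ := MJ.u_meas_bdd M hinit hu ((k : ℤ) - S.d) htk
    constructor
    · show Measurable fun ω => (S.A (M.θ k ω)).mulVec (traj S M x0 u k ω)
        + (S.B (M.θ k ω)).mulVec (u ((k : ℤ) - S.d) ω)
      apply measurable_pi_lambda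
      intro i
      show Measurable fun ω => (S.A (M.θ k ω)).mulVec (traj S M x0 u k ω) i
        + (S.B (M.θ k ω)).mulVec (u ((k : ℤ) - S.d) ω) i
      exact ((measurable_pi_apply i).comp
          (MJ.measurable_matvec S.A (M.hθ k) hxm)).add
        ((measurable_pi_apply i).comp (MJ.measurable_matvec S.B (M.hθ k) hum))
    · set CA := ∑ l, ∑ p, ∑ j, |S.A l p j| with hCA
      set CBm := ∑ l, ∑ p, ∑ j, |S.B l p j| with hCB
      have hCAnn : 0 ≤ CA := Finset.sum_nonneg fun _ _ => Finset.sum_nonneg fun _ _ =>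
        Finset.sum_nonneg fun _ _ => abs_nonneg _
      have hCBnn : 0 ≤ CBm := Finset.sum_nonneg fun _ _ => Finset.sum_nonneg fun _ _ =>
        Finset.sum_nonneg fun _ _ => abs_nonneg _
      refine ⟨(S.n : ℝ) * CA * Cx + (S.m : ℝ) * CBm * Cu, by positivity, fun ω i => ?_⟩
      show |(S.A (M.θ k ω)).mulVec (traj S M x0 u k ω) i
        + (S.B (M.θ k ω)).mulVec (u ((k : ℤ) - S.d) ω) i| ≤ _
      refine (abs_add_le _ _).trans (add_le_add ?_ ?_)
      · exact MJ.matvec_bound (fun p j => MJ.entry_le_sum3 S.A (M.θ k ω) p j)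
          (fun j => hCx ω j) hCAnn hCx0 i
      · exact MJ.matvec_bound (fun p j => MJ.entry_le_sum3 S.B (M.θ k ω) p j)
          (fun j => hCu ω j) hCBnn hCu0 i

end Traj

section Omega
open MeasureTheory Matrix

lemma MJ.sum_mulVec {a b : ℕ} {ι : Type*} (s : Finset ι)
    (N : ι → Matrix (Fin a) (Fin b) ℝ) (x : Fin b → ℝ) :
    (∑ i ∈ s, N i).mulVec x = ∑ i ∈ s, (N i).mulVec x := by
  funext p
  simp only [Matrix.mulVec, dotProduct, Matrix.sum_apply, Finset.sum_apply, Finset.sum_mul]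
  rw [Finset.sum_comm]

lemma MJ.dotProduct_finset_sum {a : ℕ} {ι : Type*} (s : Finset ι)
    (v : ι → Fin a → ℝ) (x : Fin a → ℝ) :
    x ⬝ᵥ (∑ i ∈ s, v i) = ∑ i ∈ s, x ⬝ᵥ (v i) := by
  simp only [dotProduct, Finset.sum_apply, Finset.mul_sum]
  rw [Finset.sum_comm]

lemma MJ.quad_transpose {a b : ℕ} (α : Matrix (Fin b) (Fin a) ℝ)
    (D : Matrix (Fin b) (Fin b) ℝ) (x : Fin a → ℝ) :
    x ⬝ᵥ ((αᵀ * D * α).mulVec x) = (α.mulVec x) ⬝ᵥ (D.mulVec (α.mulVec x)) := by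
  rw [← Matrix.mulVec_mulVec, ← Matrix.mulVec_mulVec, Matrix.dotProduct_mulVec,
    Matrix.vecMul_transpose]

lemma MJ.psd_quad_nonneg {q : ℕ} {D : Matrix (Fin q) (Fin q) ℝ} (hD : D.PosSemidef)
    (y : Fin q → ℝ) : 0 ≤ y ⬝ᵥ D.mulVec y := by
  simpa using hD.dotProduct_mulVec_nonneg y

lemma MJ.omega_pointwise (S : MJParams) (c : CARE S) (p : Fin S.d → Fin S.L)
    (x : Fin S.n → ℝ) :
    x ⬝ᵥ ((c.Omega p).mulVec x)
      = x ⬝ᵥ ((c.P (S.pget p 0) - c.P0 (S.pget p 0)).mulVec x)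
        - ∑ s ∈ Finset.Icc 1 (S.d - 1),
            ((c.α s (fun r : Fin s => S.pget p (r : ℕ))).mulVec x) ⬝ᵥ
              (((c.W (S.pget p s))⁻¹).mulVec
                ((c.α s (fun r : Fin s => S.pget p (r : ℕ))).mulVec x)) := by
  rw [CARE.Omega, Matrix.sub_mulVec, dotProduct_sub]
  congr 1
  rw [MJ.sum_mulVec, MJ.dotProduct_finset_sum]
  exact Finset.sum_congr rfl fun s _ => MJ.quad_transpose _ _ _

lemma MJ.pget_lt (S : MJParams) {s : ℕ} (j : Fin s → Fin S.L) {r : ℕ} (hr : r < s) :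
    S.pget j r = j ⟨r, hr⟩ := by
  rw [MJParams.pget, dif_pos hr]

end Omega

section Sandwich
open MeasureTheory Matrix

variable {Ωo : Type} [mΩ : MeasurableSpace Ωo]

lemma MJ.quad_integrable {I : Type*} [Fintype I] [MeasurableSpace I]
    [MeasurableSingletonClass I] {q : ℕ} {μ : Measure Ωo} [IsProbabilityMeasure μ]
    (N : I → Matrix (Fin q) (Fin q) ℝ) {ι : Ωo → I} (hι : Measurable ι)
    {x : Ωo → Fin q → ℝ} (hx : Measurable x) {Cx : ℝ} (h0 : 0 ≤ Cx)
    (hb : ∀ ω i, |x ω i| ≤ Cx) :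
    Integrable (fun ω => (x ω) ⬝ᵥ ((N (ι ω)).mulVec (x ω))) μ := by
  refine my_integrable_of_bdd
    ((MJ.measurable_dot hx (MJ.measurable_matvec N hι hx)).aestronglyMeasurable)
    (C := (∑ i, ∑ p, ∑ j, |N i p j|) * ((q : ℝ) * (Cx * Cx))) ?_
  intro ω
  rw [Real.norm_eq_abs]
  refine (quad_abs_le_const (N (ι ω)) (x ω) h0 (fun p => hb ω p)).trans ?_
  refine mul_le_mul_of_nonneg_right ?_ (by positivity)
  exact Finset.single_le_sum (f := fun i => ∑ p, ∑ j, |N i p j|)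
    (fun _ _ => by positivity) (Finset.mem_univ _)

lemma MJ.sandwich (S : MJParams) (c : CARE S) (hW : ∀ i, (c.W i).PosDef)
    (M : MarkovChain S Ωo)
    (x0 : Fin S.n → ℝ) (uinit : ℤ → Fin S.m → ℝ) (u : ℤ → Ωo → Fin S.m → ℝ)
    (hinit : HasInit S M uinit u) (hu : ∀ k : ℕ, Measurable[M.G k] (u (k : ℤ)))
    (k : ℕ) (hk : S.d ≤ k) :
    (∫ ω, (traj S M x0 u k ω) ⬝ᵥ
        ((c.Omega (fun t : Fin S.d => M.θ (k - 1 - (t : ℕ)) ω)).mulVec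
          (traj S M x0 u k ω)) ∂M.μ) ≤ Vfun S M c x0 u k ∧
    Vfun S M c x0 u k ≤
      ∫ ω, (traj S M x0 u k ω) ⬝ᵥ
        ((c.P (M.θ (k - 1) ω)).mulVec (traj S M x0 u k ω)) ∂M.μ := by
  haveI : IsProbabilityMeasure M.μ := M.hμ
  obtain ⟨hxm, Cx, hCx0, hCx⟩ := MJ.traj_meas_bdd M hinit hu k
  have hWinv : ∀ i, ((c.W i)⁻¹).PosSemidef := fun i => ((hW i).inv).posSemidef
  have hP0psd : ∀ i, (c.P0 i).PosSemidef := by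
    intro i
    have h := (hWinv i).conjTranspose_mul_mul_same (c.T0 i)
    rw [Matrix.conjTranspose_eq_transpose_of_trivial] at h
    rw [c.hP0 i]
    exact h
  -- the functions f s
  set x := traj S M x0 u k with hxdef
  -- Integrability of the (P - P0) quadratic form and the P quadratic form
  have hI0int : Integrable
      (fun ω => x ω ⬝ᵥ ((c.P (M.θ (k-1) ω) - c.P0 (M.θ (k-1) ω)).mulVec (x ω))) M.μ :=
    MJ.quad_integrable (fun i => c.P i - c.P0 i) (M.hθ (k-1)) hxm hCx0 hCx
  have hPint : Integrable
      (fun ω => x ω ⬝ᵥ ((c.P (M.θ (k-1) ω)).mulVec (x ω))) M.μ :=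
    MJ.quad_integrable c.P (M.hθ (k-1)) hxm hCx0 hCx
  -- terms of the Lyapunov functional
  have hVdef : Vfun S M c x0 u k =
      (∫ ω, x ω ⬝ᵥ ((c.P (M.θ (k-1) ω) - c.P0 (M.θ (k-1) ω)).mulVec (x ω)) ∂M.μ)
      - ∑ s ∈ Finset.Icc 1 (S.d - 1),
          ∫ ω, (condExp (M.G (k - s - 1)) M.μ
              (fun ω' => (c.α s (fun t : Fin s => M.θ (k - 1 - (t : ℕ)) ω')).mulVec
                (x ω')) ω)
            ⬝ᵥ ((c.W (M.θ (k - s - 1) ω))⁻¹.mulVec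
              (condExp (M.G (k - s - 1)) M.μ
                (fun ω' => (c.α s (fun t : Fin s => M.θ (k - 1 - (t : ℕ)) ω')).mulVec
                  (x ω')) ω)) ∂M.μ := rfl
  -- each subtracted term is nonnegative
  have hTermnn : ∀ s ∈ Finset.Icc 1 (S.d - 1),
      0 ≤ ∫ ω, (condExp (M.G (k - s - 1)) M.μ
            (fun ω' => (c.α s (fun t : Fin s => M.θ (k - 1 - (t : ℕ)) ω')).mulVec (x ω')) ω)
          ⬝ᵥ ((c.W (M.θ (k - s - 1) ω))⁻¹.mulVec
            (condExp (M.G (k - s - 1)) M.μ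
              (fun ω' => (c.α s (fun t : Fin s => M.θ (k - 1 - (t : ℕ)) ω')).mulVec
                (x ω')) ω)) ∂M.μ :=
    fun s _ => integral_nonneg fun ω => MJ.psd_quad_nonneg (hWinv _) _
  constructor
  · -- lower bound
    have hpath : ∀ (ω : Ωo), ∀ s ∈ Finset.Icc 1 (S.d - 1),
        (fun r : Fin s => S.pget (fun t : Fin S.d => M.θ (k - 1 - (t : ℕ)) ω) (r : ℕ))
          = fun t : Fin s => M.θ (k - 1 - (t : ℕ)) ω := by
      intro ω s hs
      rw [Finset.mem_Icc] at hs
      funext r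
      have hr : (r : ℕ) < S.d := by omega
      rw [MJ.pget_lt S _ hr]
    have hpget0 : ∀ (ω : Ωo),
        S.pget (fun t : Fin S.d => M.θ (k - 1 - (t : ℕ)) ω) 0 = M.θ (k - 1) ω := by
      intro ω
      rw [MJ.pget_lt S _ S.hd]
      simp
    have hpgets : ∀ (ω : Ωo), ∀ s ∈ Finset.Icc 1 (S.d - 1),
        S.pget (fun t : Fin S.d => M.θ (k - 1 - (t : ℕ)) ω) s = M.θ (k - s - 1) ω := by
      intro ω s hs
      rw [Finset.mem_Icc] at hs
      have hsd : s < S.d := by omega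
      rw [MJ.pget_lt S _ hsd]
      have harith : k - 1 - s = k - s - 1 := by omega
      simp [harith]
    have hpt : ∀ ω, x ω ⬝ᵥ
          ((c.Omega (fun t : Fin S.d => M.θ (k - 1 - (t : ℕ)) ω)).mulVec (x ω))
        = x ω ⬝ᵥ ((c.P (M.θ (k-1) ω) - c.P0 (M.θ (k-1) ω)).mulVec (x ω))
          - ∑ s ∈ Finset.Icc 1 (S.d - 1),
              ((c.α s (fun t : Fin s => M.θ (k - 1 - (t : ℕ)) ω)).mulVec (x ω)) ⬝ᵥ
                (((c.W (M.θ (k - s - 1) ω))⁻¹).mulVec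
                  ((c.α s (fun t : Fin s => M.θ (k - 1 - (t : ℕ)) ω)).mulVec (x ω))) := by
      intro ω
      rw [MJ.omega_pointwise, hpget0 ω]
      congr 1
      refine Finset.sum_congr rfl fun s hs => ?_
      rw [hpath ω s hs, hpgets ω s hs]
    have hfm : ∀ s : ℕ, Measurable (fun ω =>
        (c.α s (fun t : Fin s => M.θ (k - 1 - (t : ℕ)) ω)).mulVec (x ω)) := by
      intro s
      exact MJ.measurable_matvec (fun v : Fin s → Fin S.L => c.α s v)
        (measurable_pi_lambda _ fun t => M.hθ _) hxm
    have hfb : ∀ s : ℕ, ∃ Cf, 0 ≤ Cf ∧ ∀ ω p,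
        |(c.α s (fun t : Fin s => M.θ (k - 1 - (t : ℕ)) ω)).mulVec (x ω) p| ≤ Cf := by
      intro s
      have hCαnn : (0:ℝ) ≤ ∑ v : Fin s → Fin S.L, ∑ p, ∑ j, |c.α s v p j| := by positivity
      refine ⟨(S.n : ℝ) * (∑ v : Fin s → Fin S.L, ∑ p, ∑ j, |c.α s v p j|) * Cx,
        by positivity, fun ω p => ?_⟩
      exact MJ.matvec_bound
        (fun p' j => MJ.entry_le_sum3 (fun v : Fin s → Fin S.L => c.α s v) _ p' j)
        (fun j => hCx ω j) hCαnn hCx0 p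
    have hfquadint : ∀ s : ℕ, Integrable (fun ω =>
        ((c.α s (fun t : Fin s => M.θ (k - 1 - (t : ℕ)) ω)).mulVec (x ω)) ⬝ᵥ
          (((c.W (M.θ (k - s - 1) ω))⁻¹).mulVec
            ((c.α s (fun t : Fin s => M.θ (k - 1 - (t : ℕ)) ω)).mulVec (x ω)))) M.μ := by
      intro s
      obtain ⟨Cf, hCf0, hCf⟩ := hfb s
      exact MJ.quad_integrable (fun i => (c.W i)⁻¹) (M.hθ (k - s - 1)) (hfm s) hCf0 hCf
    have hsplit : (∫ ω, x ω ⬝ᵥ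
          ((c.Omega (fun t : Fin S.d => M.θ (k - 1 - (t : ℕ)) ω)).mulVec (x ω)) ∂M.μ)
        = (∫ ω, x ω ⬝ᵥ ((c.P (M.θ (k-1) ω) - c.P0 (M.θ (k-1) ω)).mulVec (x ω)) ∂M.μ)
          - ∑ s ∈ Finset.Icc 1 (S.d - 1),
              ∫ ω, ((c.α s (fun t : Fin s => M.θ (k - 1 - (t : ℕ)) ω)).mulVec (x ω)) ⬝ᵥ
                (((c.W (M.θ (k - s - 1) ω))⁻¹).mulVec
                  ((c.α s (fun t : Fin s => M.θ (k - 1 - (t : ℕ)) ω)).mulVec (x ω))) ∂M.μ := by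
      rw [integral_congr_ae (Filter.Eventually.of_forall hpt)]
      rw [integral_sub hI0int (integrable_finset_sum _ fun s _ => hfquadint s),
        integral_finset_sum _ fun s _ => hfquadint s]
    rw [hsplit, hVdef]
    refine sub_le_sub_left (Finset.sum_le_sum fun s hs => ?_) _
    obtain ⟨Cf, hCf0, hCf⟩ := hfb s
    exact key_jensen (MJ.G_le M (k - s - 1)) (MJ.theta_mble_G M (le_refl (k - s - 1)))
      hWinv (hfm s) hCf0 hCf
  · -- upper bound
    rw [hVdef]
    have h1 : Vfun S M c x0 u k ≤
        ∫ ω, x ω ⬝ᵥ ((c.P (M.θ (k-1) ω) - c.P0 (M.θ (k-1) ω)).mulVec (x ω)) ∂M.μ := by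
      rw [hVdef]
      exact sub_le_self _ (Finset.sum_nonneg hTermnn)
    rw [← hVdef]
    refine h1.trans (integral_mono hI0int hPint fun ω => ?_)
    rw [Matrix.sub_mulVec, dotProduct_sub]
    have := MJ.psd_quad_nonneg (hP0psd (M.θ (k-1) ω)) (x ω)
    linarith

end Sandwich

section Final
open MeasureTheory Matrix Filter Topology

noncomputable def MJ.Cst (S : MJParams) (c : CARE S) : ℝ :=
  (∑ i, ∑ a, ∑ b, |c.P i a b|)
    + ∑ p : Fin S.d → Fin S.L, ∑ a, ∑ b, |c.Omega p a b|

lemma MJ.Cst_nonneg (S : MJParams) (c : CARE S) : 0 ≤ MJ.Cst S c := by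
  rw [MJ.Cst]; positivity

lemma MJ.CstP_le (S : MJParams) (c : CARE S) (i : Fin S.L) :
    ∑ a, ∑ b, |c.P i a b| ≤ MJ.Cst S c := by
  rw [MJ.Cst]
  have h1 : ∑ a, ∑ b, |c.P i a b| ≤ ∑ i, ∑ a, ∑ b, |c.P i a b| :=
    Finset.single_le_sum (f := fun i => ∑ a, ∑ b, |c.P i a b|)
      (fun _ _ => by positivity) (Finset.mem_univ i)
  have h2 : (0:ℝ) ≤ ∑ p : Fin S.d → Fin S.L, ∑ a, ∑ b, |c.Omega p a b| := by positivity
  linarith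

lemma MJ.CstO_le (S : MJParams) (c : CARE S) (p : Fin S.d → Fin S.L) :
    ∑ a, ∑ b, |c.Omega p a b| ≤ MJ.Cst S c := by
  rw [MJ.Cst]
  have h1 : ∑ a, ∑ b, |c.Omega p a b|
      ≤ ∑ p : Fin S.d → Fin S.L, ∑ a, ∑ b, |c.Omega p a b| :=
    Finset.single_le_sum (f := fun p => ∑ a, ∑ b, |c.Omega p a b|)
      (fun _ _ => by positivity) (Finset.mem_univ p)
  have h2 : (0:ℝ) ≤ ∑ i, ∑ a, ∑ b, |c.P i a b| := by positivity
  linarith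

variable {Ωo : Type} [mΩ : MeasurableSpace Ωo]

lemma MJ.vbounds (S : MJParams) (c : CARE S) (hW : ∀ i, (c.W i).PosDef)
    (M : MarkovChain S Ωo)
    (x0 : Fin S.n → ℝ) (uinit : ℤ → Fin S.m → ℝ) (u : ℤ → Ωo → Fin S.m → ℝ)
    (hinit : HasInit S M uinit u) (hu : ∀ k : ℕ, Measurable[M.G k] (u (k : ℤ)))
    (k : ℕ) (hk : S.d ≤ k) :
    -(MJ.Cst S c) * (∫ ω, ∑ i, (traj S M x0 u k ω i) ^ 2 ∂M.μ) ≤ Vfun S M c x0 u k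
      ∧ Vfun S M c x0 u k
        ≤ (MJ.Cst S c) * ∫ ω, ∑ i, (traj S M x0 u k ω i) ^ 2 ∂M.μ := by
  haveI : IsProbabilityMeasure M.μ := M.hμ
  obtain ⟨hlo, hup⟩ := MJ.sandwich S c hW M x0 uinit u hinit hu k hk
  obtain ⟨hxm, Cx, hCx0, hCx⟩ := MJ.traj_meas_bdd M hinit hu k
  set x := traj S M x0 u k with hxdef
  have hsum2m : Measurable (fun ω => ∑ i, x ω i ^ 2) :=
    Finset.measurable_sum _ fun i _ => ((measurable_pi_apply i).comp hxm).pow_const 2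
  have hsum2nn : ∀ ω, (0:ℝ) ≤ ∑ i, x ω i ^ 2 :=
    fun ω => Finset.sum_nonneg fun i _ => sq_nonneg _
  have hsum2int : Integrable (fun ω => ∑ i, x ω i ^ 2) M.μ := by
    refine my_integrable_of_bdd hsum2m.aestronglyMeasurable
      (C := (S.n : ℝ) * (Cx * Cx)) ?_
    intro ω
    rw [Real.norm_eq_abs, abs_of_nonneg (hsum2nn ω)]
    calc ∑ i, x ω i ^ 2 ≤ ∑ _i : Fin S.n, Cx * Cx := by
          refine Finset.sum_le_sum fun i _ => ?_
          rw [pow_two, ← abs_mul_self (x ω i), abs_mul]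
          exact mul_le_mul (hCx ω i) (hCx ω i) (abs_nonneg _) hCx0
      _ = (S.n : ℝ) * (Cx * Cx) := by simp [Finset.sum_const, mul_assoc]
  have hΩint : Integrable (fun ω => x ω ⬝ᵥ
      ((c.Omega (fun t : Fin S.d => M.θ (k - 1 - (t : ℕ)) ω)).mulVec (x ω))) M.μ :=
    MJ.quad_integrable c.Omega (measurable_pi_lambda _ fun t => M.hθ _) hxm hCx0 hCx
  have hPint : Integrable (fun ω => x ω ⬝ᵥ
      ((c.P (M.θ (k - 1) ω)).mulVec (x ω))) M.μ :=
    MJ.quad_integrable c.P (M.hθ (k - 1)) hxm hCx0 hCx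
  constructor
  · refine le_trans ?_ hlo
    have hpt : ∀ ω, -(MJ.Cst S c) * (∑ i, x ω i ^ 2)
        ≤ x ω ⬝ᵥ ((c.Omega (fun t : Fin S.d => M.θ (k - 1 - (t : ℕ)) ω)).mulVec (x ω)) := by
      intro ω
      have h1 := quad_abs_le_sum_sq (c.Omega (fun t : Fin S.d => M.θ (k - 1 - (t : ℕ)) ω)) (x ω)
      have h2 := mul_le_mul_of_nonneg_right
        (MJ.CstO_le S c (fun t : Fin S.d => M.θ (k - 1 - (t : ℕ)) ω)) (hsum2nn ω)
      have h3 := (abs_le.mp (h1.trans h2)).1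
      linarith
    calc -(MJ.Cst S c) * (∫ ω, ∑ i, x ω i ^ 2 ∂M.μ)
        = ∫ ω, -(MJ.Cst S c) * (∑ i, x ω i ^ 2) ∂M.μ := (integral_const_mul _ _).symm
      _ ≤ _ := integral_mono (hsum2int.const_mul _) hΩint hpt
  · refine hup.trans ?_
    have hpt : ∀ ω, x ω ⬝ᵥ ((c.P (M.θ (k - 1) ω)).mulVec (x ω))
        ≤ (MJ.Cst S c) * (∑ i, x ω i ^ 2) := by
      intro ω
      have h1 := quad_abs_le_sum_sq (c.P (M.θ (k - 1) ω)) (x ω)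
      have h2 := mul_le_mul_of_nonneg_right (MJ.CstP_le S c (M.θ (k - 1) ω)) (hsum2nn ω)
      have h3 := (abs_le.mp (h1.trans h2)).2
      linarith
    calc ∫ ω, x ω ⬝ᵥ ((c.P (M.θ (k - 1) ω)).mulVec (x ω)) ∂M.μ
        ≤ ∫ ω, (MJ.Cst S c) * (∑ i, x ω i ^ 2) ∂M.μ :=
          integral_mono hPint (hsum2int.const_mul _) hpt
      _ = (MJ.Cst S c) * ∫ ω, ∑ i, x ω i ^ 2 ∂M.μ := integral_const_mul _ _

end Final

theorem stmt17 (S : MJParams) (hR : S.R.PosDef) (hQ : S.Q.PosSemidef)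
    (c : CARE S) (hW : ∀ i, (c.W i).PosDef) :
    ∀ {Ω : Type} [MeasurableSpace Ω] (M : MarkovChain S Ω)
      (x0 : Fin S.n → ℝ) (uinit : ℤ → Fin S.m → ℝ) (u : ℤ → Ω → Fin S.m → ℝ),
      HasInit S M uinit u →
      (∀ k : ℕ, Measurable[M.G k] (u (k : ℤ))) →
      (∀ k : ℕ, S.d ≤ k →
        (∫ ω, (traj S M x0 u k ω) ⬝ᵥ
            ((c.Omega (fun t : Fin S.d => M.θ (k - 1 - (t : ℕ)) ω)).mulVec
              (traj S M x0 u k ω)) ∂M.μ) ≤ Vfun S M c x0 u k ∧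
        Vfun S M c x0 u k ≤
          ∫ ω, (traj S M x0 u k ω) ⬝ᵥ
            ((c.P (M.θ (k - 1) ω)).mulVec (traj S M x0 u k ω)) ∂M.μ) ∧
      (Tendsto (fun k : ℕ => ∫ ω, (∑ i, (traj S M x0 u k ω i) ^ 2) ∂M.μ) atTop (𝓝 0) →
        Tendsto (fun k : ℕ => Vfun S M c x0 u k) atTop (𝓝 0)) := by
  intro Ω _ M x0 uinit u hinit hu
  constructor
  · intro k hk
    exact MJ.sandwich S c hW M x0 uinit u hinit hu k hk
  · intro htend
    have hlow : Tendsto (fun k : ℕ =>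
        -(MJ.Cst S c) * ∫ ω, ∑ i, (traj S M x0 u k ω i) ^ 2 ∂M.μ) atTop (𝓝 0) := by
      have := htend.const_mul (-(MJ.Cst S c))
      simpa using this
    have hhigh : Tendsto (fun k : ℕ =>
        (MJ.Cst S c) * ∫ ω, ∑ i, (traj S M x0 u k ω i) ^ 2 ∂M.μ) atTop (𝓝 0) := by
      have := htend.const_mul (MJ.Cst S c)
      simpa using this
    refine tendsto_of_tendsto_of_tendsto_of_le_of_le' hlow hhigh ?_ ?_
    · filter_upwards [eventually_ge_atTop S.d] with k hk
      exact (MJ.vbounds S c hW M x0 uinit u hinit hu k hk).1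
    · filter_upwards [eventually_ge_atTop S.d] with k hk
      exact (MJ.vbounds S c hW M x0 uinit u hinit hu k hk).2
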